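/- For n ∈ {9, 10, 11}, the murtage number of the underlying graph of the finite Jaco graph J_n(1) equals 3; in particular the upper bound m(J_n(1)) ≤ 3 is sharp. -/

import Mathlib

set_option linter.unusedSectionVars false


open SimpleGraph

/-- In-degree of vertex `j` in the infinite Jaco graph `J_∞(1)`:
the number of `i < j` with an arc `(v_i, v_j)`, i.e. `i < j` and `j ≤ 2i - d⁻(v_i)`. -/
noncomputable def jacoInDeg (j : ℕ) : ℕ :=
  Nat.strongRecOn j fun j ih =>
    ((Finset.range j).attach.filter
      (fun i => j ≤ 2 * i.1 - ih i.1 (Finset.mem_range.mp i.2))).card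

/-- Out-degree of vertex `i` in `J_∞(1)`: the number of `j` with `i < j ≤ 2i - d⁻(v_i)`. -/
noncomputable def jacoOutDeg (i : ℕ) : ℕ := (Finset.Ioc i (2 * i - jacoInDeg i)).card

/-- The underlying (undirected, simple) graph of the infinite Jaco graph `J_∞(1)` on `ℕ`,
with vertex `i` playing the role of `v_i`. -/
def JacoInf : SimpleGraph ℕ where
  Adj i j := (i < j ∧ j ≤ 2 * i - jacoInDeg i) ∨ (j < i ∧ i ≤ 2 * j - jacoInDeg j)
  symm := ⟨fun i j h => Or.symm h⟩
  loopless := ⟨fun i h => by rcases h with ⟨h, -⟩ | ⟨h, -⟩ <;> omega⟩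

/-- The underlying graph of the finite Jaco graph `J_n(1)`: the subgraph of `J_∞(1)`
induced by `{v_1, …, v_n}`, with `(k : Fin n)` representing `v_{k+1}`. -/
def Jaco (n : ℕ) : SimpleGraph (Fin n) := JacoInf.comap (fun k => (k : ℕ) + 1)

/-- `s` is an independent set of `G`. -/
def IsIndepSet {V : Type*} (G : SimpleGraph V) (s : Set V) : Prop :=
  s.Pairwise fun a b => ¬ G.Adj a b

/-- The independence number of `G`. -/
noncomputable def indepNum {V : Type*} [Fintype V] (G : SimpleGraph V) : ℕ :=
  sSup {k | ∃ s : Set V, _root_.IsIndepSet G s ∧ s.ncard = k}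

/-- `s` is a vertex cover of `G`: it meets every edge. -/
def IsVertexCover {V : Type*} (G : SimpleGraph V) (s : Set V) : Prop :=
  ∀ ⦃a b : V⦄, G.Adj a b → a ∈ s ∨ b ∈ s

/-- The vertex covering number of `G`. -/
noncomputable def coverNum {V : Type*} [Fintype V] (G : SimpleGraph V) : ℕ :=
  sInf {k | ∃ s : Set V, _root_.IsVertexCover G s ∧ s.ncard = k}

/-- `s` is a dominating set of `G`. -/
def IsDomSet {V : Type*} (G : SimpleGraph V) (s : Set V) : Prop :=
  ∀ v ∉ s, ∃ u ∈ s, G.Adj u v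

/-- The domination number `γ(G)`. -/
noncomputable def domNum {V : Type*} [Fintype V] (G : SimpleGraph V) : ℕ :=
  sInf {k | ∃ s : Set V, IsDomSet G s ∧ s.ncard = k}

/-- The murtage number `m(G)`: the minimum number of edges whose addition to `G`
strictly decreases the domination number (and `0` when `γ(G) = 1`). -/
noncomputable def murtage {V : Type*} [Fintype V] (G : SimpleGraph V) : ℕ :=
  if domNum G = 1 then 0
  else sInf {k | ∃ H : SimpleGraph V, G ≤ H ∧ domNum H < domNum G ∧
        (H.edgeSet \ G.edgeSet).ncard = k}

/-- `γ⁻(G)`: the minimum number of vertices whose removal strictly decreases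
the domination number. -/
noncomputable def gammaMinus {V : Type*} [Fintype V] (G : SimpleGraph V) : ℕ :=
  sInf {k | ∃ s : Set V, s.ncard = k ∧
        @domNum _ (Set.toFinite sᶜ).fintype (G.induce sᶜ) < domNum G}

/-- The bondage number `b(G)`: the minimum number of edges whose removal strictly
increases the domination number. -/
noncomputable def bondage {V : Type*} [Fintype V] (G : SimpleGraph V) : ℕ :=
  sInf {k | ∃ H : SimpleGraph V, H ≤ G ∧ domNum G < domNum H ∧
        (G.edgeSet \ H.edgeSet).ncard = k}

/-- The maximum degree `Δ(G)`. -/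
noncomputable def maxDeg {V : Type*} [Fintype V] (G : SimpleGraph V) : ℕ :=
  Finset.univ.sup fun v => (G.neighborSet v).ncard



private def JF : ∀ j : ℕ, (∀ m, m < j → ℕ) → ℕ := fun j ih =>
  ((Finset.range j).attach.filter
      (fun i => j ≤ 2 * i.1 - ih i.1 (Finset.mem_range.mp i.2))).card

lemma jacoInDeg_fix (j : ℕ) : jacoInDeg j = Nat.lt_wfRel.wf.fix JF j := rfl

lemma jacoInDeg_eq (j : ℕ) :
    jacoInDeg j = ((Finset.range j).filter fun i => j ≤ 2 * i - jacoInDeg i).card := by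
  rw [jacoInDeg_fix j, WellFounded.fix_eq]
  show ((Finset.range j).attach.filter
      (fun i => j ≤ 2 * i.1 - Nat.lt_wfRel.wf.fix JF i.1)).card = _
  simp only [← jacoInDeg_fix]
  erw [Finset.filter_attach (fun i => j ≤ 2 * i - jacoInDeg i), Finset.card_map,
    Finset.card_attach]

def Dtab : ℕ → ℕ
  | 0 => 0 | 1 => 0
  | 2 => 1 | 3 => 1 | 4 => 1
  | 5 => 2 | 6 => 2
  | 7 => 3 | 8 => 3 | 9 => 3
  | 10 => 4 | 11 => 4
  | _ => 0

lemma jacoInDeg_eq_D : ∀ j, j ≤ 11 → jacoInDeg j = Dtab j := by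
  intro j
  induction j using Nat.strong_induction_on with
  | _ j ih =>
    intro hj
    rw [jacoInDeg_eq]
    have h : (Finset.range j).filter (fun i => j ≤ 2 * i - jacoInDeg i)
        = (Finset.range j).filter (fun i => j ≤ 2 * i - Dtab i) := by
      apply Finset.filter_congr
      intro i hi
      have hi' := Finset.mem_range.mp hi
      rw [ih i hi' (by omega)]
    rw [h]
    interval_cases j <;> decide

/-- Computable model of the Jaco graph for `n ≤ 11`. -/
def JacoD (n : ℕ) : SimpleGraph (Fin n) where
  Adj a b := ((a : ℕ) < (b : ℕ) ∧ (b : ℕ) + 1 ≤ 2 * ((a : ℕ) + 1) - Dtab ((a : ℕ) + 1)) ∨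
    ((b : ℕ) < (a : ℕ) ∧ (a : ℕ) + 1 ≤ 2 * ((b : ℕ) + 1) - Dtab ((b : ℕ) + 1))
  symm := ⟨fun a b h => Or.symm h⟩
  loopless := ⟨fun a h => by rcases h with ⟨h, -⟩ | ⟨h, -⟩ <;> omega⟩

instance jacoDDec {n : ℕ} : DecidableRel (JacoD n).Adj := fun a b =>
  inferInstanceAs (Decidable
    ((((a : ℕ) < (b : ℕ) ∧ (b : ℕ) + 1 ≤ 2 * ((a : ℕ) + 1) - Dtab ((a : ℕ) + 1)) ∨
    ((b : ℕ) < (a : ℕ) ∧ (a : ℕ) + 1 ≤ 2 * ((b : ℕ) + 1) - Dtab ((b : ℕ) + 1)))))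

lemma jaco_eq {n : ℕ} (hn : n ≤ 11) : Jaco n = JacoD n := by
  ext a b
  have ha : (a : ℕ) + 1 ≤ 11 := by have := a.isLt; omega
  have hb : (b : ℕ) + 1 ≤ 11 := by have := b.isLt; omega
  show ((a : ℕ) + 1 < (b : ℕ) + 1 ∧ (b : ℕ) + 1 ≤ 2 * ((a : ℕ) + 1) - jacoInDeg ((a : ℕ) + 1)) ∨
    ((b : ℕ) + 1 < (a : ℕ) + 1 ∧ (a : ℕ) + 1 ≤ 2 * ((b : ℕ) + 1) - jacoInDeg ((b : ℕ) + 1)) ↔ _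
  rw [jacoInDeg_eq_D _ ha, jacoInDeg_eq_D _ hb]
  constructor
  · rintro (⟨h1, h2⟩ | ⟨h1, h2⟩)
    · exact Or.inl ⟨by omega, h2⟩
    · exact Or.inr ⟨by omega, h2⟩
  · rintro (⟨h1, h2⟩ | ⟨h1, h2⟩)
    · exact Or.inl ⟨by omega, h2⟩
    · exact Or.inr ⟨by omega, h2⟩

section DomLemmas
variable {V : Type*} [Fintype V] [DecidableEq V]

lemma isDomSet_coe (G : SimpleGraph V) (s : Finset V) :
    IsDomSet G ↑s ↔ ∀ v, v ∈ s ∨ ∃ u ∈ s, G.Adj u v := by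
  constructor
  · intro h v
    by_cases hv : v ∈ s
    · exact Or.inl hv
    · exact Or.inr (h v (by simpa using hv))
  · intro h v hv
    rcases h v with h' | h'
    · exact absurd h' (by simpa using hv)
    · exact h'

lemma domNum_le (G : SimpleGraph V) (s : Finset V) (h : IsDomSet G ↑s) :
    domNum G ≤ s.card :=
  Nat.sInf_le ⟨↑s, h, Set.ncard_coe_finset s⟩

lemma exists_dom_singleton [Nonempty V] (H : SimpleGraph V) (h : domNum H < 2) :
    ∃ v : V, ∀ u, u ≠ v → H.Adj v u := by
  have hne : {k | ∃ s : Set V, IsDomSet H s ∧ s.ncard = k}.Nonempty :=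
    ⟨(Set.univ : Set V).ncard, Set.univ, fun v hv => absurd (Set.mem_univ v) hv, rfl⟩
  have hmem := Nat.sInf_mem hne
  obtain ⟨s, hs, hcard⟩ := hmem
  have h2 : s.ncard < 2 := by rw [hcard]; exact h
  interval_cases hh : s.ncard
  · rw [Set.ncard_eq_zero] at hh
    subst hh
    obtain ⟨v⟩ := ‹Nonempty V›
    obtain ⟨u, hu, -⟩ := hs v (Set.notMem_empty v)
    exact absurd hu (Set.notMem_empty u)
  · rw [Set.ncard_eq_one] at hh
    obtain ⟨v, rfl⟩ := hh
    refine ⟨v, fun u hu => ?_⟩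
    obtain ⟨w, hw, hadj⟩ := hs u (by simpa using hu)
    rwa [Set.mem_singleton_iff.mp hw] at hadj

lemma two_le_domNum [Nonempty V] (G : SimpleGraph V)
    (h : ∀ v : V, ∃ u, u ≠ v ∧ ¬ G.Adj v u) : 2 ≤ domNum G := by
  by_contra h'
  push_neg at h'
  obtain ⟨v, hv⟩ := exists_dom_singleton G h'
  obtain ⟨u, hu1, hu2⟩ := h v
  exact hu2 (hv u hu1)

lemma key_murtage [Nonempty V] (G : SimpleGraph V) [DecidableRel G.Adj]
    (v a b c : V)
    (hγ : domNum G = 2)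
    (hva : a ≠ v) (hvb : b ≠ v) (hvc : c ≠ v)
    (hab : a ≠ b) (hac : a ≠ c) (hbc : b ≠ c)
    (hna : ¬ G.Adj v a) (hnb : ¬ G.Adj v b) (hnc : ¬ G.Adj v c)
    (hcov : ∀ u, u ≠ v → u ≠ a → u ≠ b → u ≠ c → G.Adj v u)
    (hdeg : ∀ w : V, 3 ≤ (Finset.univ.filter fun u => u ≠ w ∧ ¬ G.Adj w u).card) :
    murtage G = 3 := by
  rw [murtage, if_neg (by rw [hγ]; omega)]
  -- the witness graph
  set E : Set (Sym2 V) := {s(v, a), s(v, b), s(v, c)} with hE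
  set H : SimpleGraph V := G ⊔ SimpleGraph.fromEdgeSet E with hH
  have hdom1 : IsDomSet H {v} := by
    intro u hu
    refine ⟨v, rfl, ?_⟩
    have huv : u ≠ v := by simpa using hu
    by_cases h1 : u = a
    · subst h1; exact Or.inr ((fromEdgeSet_adj E).mpr ⟨by simp [hE], fun h => hva h.symm⟩)
    by_cases h2 : u = b
    · subst h2; exact Or.inr ((fromEdgeSet_adj E).mpr ⟨by simp [hE], fun h => hvb h.symm⟩)
    by_cases h3 : u = c
    · subst h3; exact Or.inr ((fromEdgeSet_adj E).mpr ⟨by simp [hE], fun h => hvc h.symm⟩)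
    · exact Or.inl (hcov u huv h1 h2 h3)
  have hdomH : domNum H ≤ 1 := Nat.sInf_le ⟨{v}, hdom1, Set.ncard_singleton v⟩
  have hdiff : H.edgeSet \ G.edgeSet = E := by
    rw [hH, SimpleGraph.edgeSet_sup, SimpleGraph.edgeSet_fromEdgeSet]
    ext e
    simp only [Set.mem_diff, Set.mem_union, Set.mem_setOf_eq]
    constructor
    · rintro ⟨hg | ⟨he, -⟩, hne⟩
      · exact absurd hg hne
      · exact he
    · intro he
      have hnd : ¬ e.IsDiag := by
        rcases he with rfl | rfl | rfl <;>
          simp [Sym2.isDiag_iff_proj_eq] <;> [exact fun h => hva h.symm;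
            exact fun h => hvb h.symm; exact fun h => hvc h.symm]
      have hng : e ∉ G.edgeSet := by
        rcases he with rfl | rfl | rfl <;> simpa [SimpleGraph.mem_edgeSet]
      exact ⟨Or.inr ⟨he, hnd⟩, hng⟩
  have hEcard : E.ncard = 3 := by
    have h1 : s(v, a) ≠ s(v, b) := fun h => by
      rcases Sym2.eq_iff.mp h with ⟨-, h'⟩ | ⟨-, h'⟩
      · exact hab h'
      · exact hva h'
    have h2 : s(v, a) ≠ s(v, c) := fun h => by
      rcases Sym2.eq_iff.mp h with ⟨-, h'⟩ | ⟨-, h'⟩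
      · exact hac h'
      · exact hva h'
    have h3 : s(v, b) ≠ s(v, c) := fun h => by
      rcases Sym2.eq_iff.mp h with ⟨-, h'⟩ | ⟨-, h'⟩
      · exact hbc h'
      · exact hvb h'
    rw [hE, Set.ncard_insert_of_notMem (by simp [h1, h2]),
      Set.ncard_insert_of_notMem (by simp [h3]), Set.ncard_singleton]
  have hmem3 : 3 ∈ {k | ∃ H' : SimpleGraph V, G ≤ H' ∧ domNum H' < domNum G ∧
      (H'.edgeSet \ G.edgeSet).ncard = k} := by
    exact ⟨H, le_sup_left, by rw [hγ]; omega, by rw [hdiff]; exact hEcard⟩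
  apply le_antisymm (Nat.sInf_le hmem3)
  apply le_csInf ⟨3, hmem3⟩
  rintro k ⟨H', hle, hlt, rfl⟩
  rw [hγ] at hlt
  obtain ⟨w, hw⟩ := exists_dom_singleton H' hlt
  set N : Finset V := Finset.univ.filter fun u => u ≠ w ∧ ¬ G.Adj w u with hN
  have hinj : Set.InjOn (fun u => s(w, u)) ↑N := by
    intro x hx y hy hxy
    rcases Sym2.eq_iff.mp hxy with ⟨-, h'⟩ | ⟨h', h''⟩
    · exact h'
    · exfalso
      have : x ≠ w := by
        simp only [hN, Finset.coe_filter, Set.mem_setOf_eq] at hx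
        exact hx.2.1
      exact this h''
  have hsub : (fun u => s(w, u)) '' ↑N ⊆ H'.edgeSet \ G.edgeSet := by
    rintro e ⟨u, hu, rfl⟩
    simp only [hN, Finset.coe_filter, Set.mem_setOf_eq] at hu
    constructor
    · exact H'.mem_edgeSet.mpr (hw u hu.2.1)
    · exact fun h => hu.2.2 (G.mem_edgeSet.mp h)
  calc (3 : ℕ) ≤ N.card := hdeg w
    _ = (↑N : Set V).ncard := (Set.ncard_coe_finset N).symm
    _ = ((fun u => s(w, u)) '' ↑N).ncard := (Set.ncard_image_of_injOn hinj).symm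
    _ ≤ (H'.edgeSet \ G.edgeSet).ncard := Set.ncard_le_ncard hsub (Set.toFinite _)

end DomLemmas

lemma domNum_JacoD_nine : domNum (JacoD 9) = 2 := by
  apply le_antisymm
  · have := domNum_le (JacoD 9) {1, 5} ((isDomSet_coe _ _).mpr (by decide))
    simpa using this
  · exact two_le_domNum _ (by decide)


lemma domNum_JacoD_ten : domNum (JacoD 10) = 2 := by
  apply le_antisymm
  · have := domNum_le (JacoD 10) {1, 5} ((isDomSet_coe _ _).mpr (by decide))
    simpa using this
  · exact two_le_domNum _ (by decide)

lemma domNum_JacoD_eleven : domNum (JacoD 11) = 2 := by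
  apply le_antisymm
  · have := domNum_le (JacoD 11) {1, 6} ((isDomSet_coe _ _).mpr (by decide))
    simpa using this
  · exact two_le_domNum _ (by decide)

/-- For `n ∈ {9, 10, 11}`, `m(J_n(1)) = 3`; in particular the upper
bound `m(J_n(1)) ≤ 3` is sharp. -/
theorem jaco_murtage_eq_three (n : ℕ) (hn : n = 9 ∨ n = 10 ∨ n = 11) :
    murtage (Jaco n) = 3 := by
  rcases hn with rfl | rfl | rfl
  · rw [jaco_eq (by norm_num)]
    exact key_murtage (JacoD 9) 4 0 1 8 domNum_JacoD_nine
      (by decide) (by decide) (by decide) (by decide) (by decide) (by decide)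
      (by decide) (by decide) (by decide) (by decide) (by decide)
  · rw [jaco_eq (by norm_num)]
    exact key_murtage (JacoD 10) 5 0 1 2 domNum_JacoD_ten
      (by decide) (by decide) (by decide) (by decide) (by decide) (by decide)
      (by decide) (by decide) (by decide) (by decide) (by decide)
  · rw [jaco_eq (by norm_num)]
    exact key_murtage (JacoD 11) 6 0 1 2 domNum_JacoD_eleven
      (by decide) (by decide) (by decide) (by decide) (by decide) (by decide)
      (by decide) (by decide) (by decide) (by decide) (by decide)
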